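/- Let s, z : (0,∞) → ℝ with s continuous and z twice differentiable, satisfying z'' + z'/r − z/r² − z s² = 0 on (0,∞). Assume there exists a > 0 with z(r) > 0 for all r ∈ (0,a), and z(r) → 0 as r → ∞. Then z(r) > 0 for all r > 0. -/

import Mathlib

open Set Filter MeasureTheory Topology Real


private lemma q_pos (s : ℝ → ℝ) {t : ℝ} (ht : 0 < t) : 0 < 1/t + t * s t ^ 2 := by
  positivity

private lemma w_deriv (s z z' z'' : ℝ → ℝ)
    (hz'' : ∀ r ∈ Set.Ioi (0:ℝ), HasDerivAt z' (z'' r) r)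
    (heq : ∀ r ∈ Set.Ioi (0:ℝ),
      z'' r + z' r / r - z r / r ^ 2 - z r * s r ^ 2 = 0)
    {t : ℝ} (ht : 0 < t) :
    HasDerivAt (fun r => r * z' r) ((1/t + t * s t ^ 2) * z t) t := by
  have h := (hasDerivAt_id t).mul (hz'' t ht)
  refine h.congr_deriv ?_
  have he := heq t ht
  have ht' : t ≠ 0 := ne_of_gt ht
  field_simp at he ⊢
  simp only [id_eq]
  nlinarith [he]

private lemma z_nonneg (s z z' z'' : ℝ → ℝ)
    (hz' : ∀ r ∈ Set.Ioi (0:ℝ), HasDerivAt z (z' r) r)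
    (hz'' : ∀ r ∈ Set.Ioi (0:ℝ), HasDerivAt z' (z'' r) r)
    (heq : ∀ r ∈ Set.Ioi (0:ℝ),
      z'' r + z' r / r - z r / r ^ 2 - z r * s r ^ 2 = 0)
    (a : ℝ) (ha : 0 < a) (hpos : ∀ r : ℝ, 0 < r → r < a → 0 < z r)
    (hlim : Filter.Tendsto z Filter.atTop (nhds 0)) :
    ∀ r : ℝ, 0 < r → 0 ≤ z r := by
  by_contra h
  push_neg at h
  obtain ⟨r₂, hr₂pos, hr₂neg⟩ := h
  have har₂ : a ≤ r₂ := by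
    by_contra hlt; push_neg at hlt
    linarith [hpos r₂ hr₂pos hlt]
  obtain ⟨m, hm⟩ : ∃ m, m = z r₂ := ⟨_, rfl⟩
  have hm0 : m < 0 := hm ▸ hr₂neg
  have hev : ∀ᶠ r in atTop, m / 2 < z r :=
    hlim.eventually (eventually_gt_nhds (by linarith))
  obtain ⟨R₀, hR₀⟩ := eventually_atTop.mp hev
  obtain ⟨R, hRdef⟩ : ∃ R, R = max R₀ r₂ := ⟨_, rfl⟩
  have hr₂R : r₂ ≤ R := hRdef ▸ le_max_right _ _
  have hRR₀ : R₀ ≤ R := hRdef ▸ le_max_left _ _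
  have haR : a/2 ≤ R := by linarith
  have hcont : ContinuousOn z (Icc (a/2) R) := fun x hx =>
    ((hz' x (by simp only [mem_Ioi]; linarith [hx.1])).differentiableAt.continuousAt).continuousWithinAt
  obtain ⟨rs, hrs, hmin⟩ := isCompact_Icc.exists_isMinOn ⟨r₂, ⟨by linarith, hr₂R⟩⟩ hcont
  have hminle : ∀ x ∈ Icc (a/2) R, z rs ≤ z x := fun x hx => hmin hx
  have hzrs : z rs ≤ m := hm ▸ hminle r₂ ⟨by linarith, hr₂R⟩
  have h1 : a/2 < rs := by
    rcases lt_or_eq_of_le hrs.1 with h | h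
    · exact h
    · exfalso
      have := hpos (a/2) (by linarith) (by linarith)
      rw [h] at this; linarith
  have h2 : rs < R := by
    rcases lt_or_eq_of_le hrs.2 with h | h
    · exact h
    · exfalso
      have := hR₀ R hRR₀
      rw [h] at hzrs; linarith
  have hrspos : (0:ℝ) < rs := by linarith
  have hloc : IsLocalMin z rs := hmin.isLocalMin (Icc_mem_nhds h1 h2)
  have hz'rs : z' rs = 0 := hloc.hasDerivAt_eq_zero (hz' rs hrspos)
  -- z < 0 on a small left interval
  have hc : ContinuousAt z rs := (hz' rs hrspos).differentiableAt.continuousAt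
  have hnb : z ⁻¹' Iio 0 ∈ 𝓝 rs := hc (Iio_mem_nhds (by linarith : z rs < 0))
  obtain ⟨ε, hε, hball⟩ := Metric.mem_nhds_iff.mp hnb
  obtain ⟨δ, hδpos, hδ1, hδ2⟩ : ∃ δ, 0 < δ ∧ δ ≤ ε/2 ∧ δ ≤ (rs - a/2)/2 :=
    ⟨min (ε/2) ((rs - a/2)/2), lt_min (by linarith) (by linarith), min_le_left _ _, min_le_right _ _⟩
  obtain ⟨p, hpdef⟩ : ∃ p, p = rs - δ := ⟨_, rfl⟩
  have hpa : a/2 < p := by rw [hpdef]; linarith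
  have hplt : p < rs := by rw [hpdef]; linarith
  have hppos : (0:ℝ) < p := by linarith
  have hzneg : ∀ x ∈ Icc p rs, z x < 0 := by
    intro x hx
    have hd : dist x rs < ε := by
      rw [Real.dist_eq, abs_lt]
      have h1 := hx.1
      have h2 := hx.2
      rw [hpdef] at h1
      constructor <;> linarith
    exact hball (Metric.mem_ball.mpr hd)
  -- w = r * z' is strictly decreasing on [p, rs]
  have hwcont : ContinuousOn (fun r => r * z' r) (Icc p rs) := fun x hx =>
    ((w_deriv s z z' z'' hz'' heq (by linarith [hx.1] : (0:ℝ) < x)).differentiableAt.continuousAt).continuousWithinAt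
  have hanti : StrictAntiOn (fun r => r * z' r) (Icc p rs) := by
    apply strictAntiOn_of_deriv_neg (convex_Icc _ _) hwcont
    intro x hx
    rw [interior_Icc] at hx
    have hx0 : (0:ℝ) < x := by linarith [hx.1]
    rw [(w_deriv s z z' z'' hz'' heq hx0).deriv]
    exact mul_neg_of_pos_of_neg (q_pos s hx0) (hzneg x ⟨hx.1.le, hx.2.le⟩)
  have hwrs : rs * z' rs = 0 := by rw [hz'rs]; ring
  have hz'pos : ∀ x ∈ Ioo p rs, 0 < z' x := by
    intro x hx
    have hx0 : (0:ℝ) < x := by linarith [hx.1]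
    have h3 : (0:ℝ) < x * z' x := by
      have := hanti ⟨hx.1.le, hx.2.le⟩ (right_mem_Icc.mpr hplt.le) hx.2
      simp only [hwrs] at this
      linarith
    by_contra hcon
    push_neg at hcon
    nlinarith
  have hzc : ContinuousOn z (Icc p rs) := fun x hx =>
    ((hz' x (by simp only [mem_Ioi]; linarith [hx.1])).differentiableAt.continuousAt).continuousWithinAt
  have hmono : StrictMonoOn z (Icc p rs) := by
    apply strictMonoOn_of_deriv_pos (convex_Icc _ _) hzc
    intro x hx
    rw [interior_Icc] at hx
    have hx0 : (0:ℝ) < x := by linarith [hx.1]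
    rw [(hz' x hx0).deriv]
    exact hz'pos x hx
  have hlt : z p < z rs := hmono (left_mem_Icc.mpr hplt.le) (right_mem_Icc.mpr hplt.le) hplt
  have : z rs ≤ z p := hminle p ⟨hpa.le, by linarith⟩
  linarith
/-- Lemma 1 of the paper: the gauge-field profile `z` of the Nielsen–Olesen vortex,
which satisfies `z'' + z'/r − z/r² − z s² = 0`, is positive near `r = 0` and tends to `0`
at infinity, is positive definite on all of `(0,∞)`. -/
theorem statement1 (s z z' z'' : ℝ → ℝ)
    (hs : ContinuousOn s (Set.Ioi (0:ℝ)))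
    (hz' : ∀ r ∈ Set.Ioi (0:ℝ), HasDerivAt z (z' r) r)
    (hz'' : ∀ r ∈ Set.Ioi (0:ℝ), HasDerivAt z' (z'' r) r)
    (heq : ∀ r ∈ Set.Ioi (0:ℝ),
      z'' r + z' r / r - z r / r ^ 2 - z r * s r ^ 2 = 0)
    (a : ℝ) (ha : 0 < a) (hpos : ∀ r : ℝ, 0 < r → r < a → 0 < z r)
    (hlim : Filter.Tendsto z Filter.atTop (nhds 0)) :
    ∀ r : ℝ, 0 < r → 0 < z r := by
  have hnn := z_nonneg s z z' z'' hz' hz'' heq a ha hpos hlim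
  by_contra h
  push_neg at h
  obtain ⟨r₀, hr₀pos, hr₀⟩ := h
  have hz0 : z r₀ = 0 := le_antisymm hr₀ (hnn r₀ hr₀pos)
  have har : a ≤ r₀ := by
    by_contra hc; push_neg at hc
    linarith [hpos r₀ hr₀pos hc]
  have hloc : IsLocalMin z r₀ := by
    filter_upwards [isOpen_Ioi.mem_nhds (show r₀ ∈ Set.Ioi (0:ℝ) from hr₀pos)] with x hx
    rw [hz0]; exact hnn x hx
  have hz'r₀ : z' r₀ = 0 := hloc.hasDerivAt_eq_zero (hz' r₀ hr₀pos)
  have hsub : Set.Icc (a/2) r₀ ⊆ Set.Ioi (0:ℝ) := fun x hx => by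
    simp only [Set.mem_Ioi]; linarith [hx.1]
  obtain ⟨B, hB⟩ := isCompact_Icc.exists_bound_of_continuousOn (hs.mono hsub)
  have hB0 : 0 ≤ B := le_trans (norm_nonneg _) (hB (a/2) ⟨le_refl _, by linarith⟩)
  obtain ⟨Q, hQdef⟩ : ∃ Q, Q = 2/a + r₀ * B^2 := ⟨_, rfl⟩
  have hQ0 : 0 ≤ Q := by rw [hQdef]; positivity
  have hqQ : ∀ x ∈ Set.Icc (a/2) r₀, 1/x + x * s x ^ 2 ≤ Q := by
    intro x hx
    have hx0 : (0:ℝ) < x := hsub hx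
    have h1 : 1/x ≤ 2/a := by
      rw [div_le_div_iff₀ hx0 ha]; linarith [hx.1]
    have hb := hB x hx
    rw [Real.norm_eq_abs] at hb
    have hs2 : s x ^ 2 ≤ B ^ 2 := by nlinarith [abs_nonneg (s x), sq_abs (s x)]
    have h2 : x * s x ^ 2 ≤ r₀ * B ^ 2 := by nlinarith [hx.2, sq_nonneg (s x)]
    rw [hQdef]; linarith
  obtain ⟨C, hCdef⟩ : ∃ C, C = 2/a + Q := ⟨_, rfl⟩
  have h2a : (0:ℝ) < 2/a := by positivity
  -- w = r * z' is monotone (nondecreasing) on [a/2, r₀], hence ≤ 0 there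
  have hwmono : MonotoneOn (fun r => r * z' r) (Set.Icc (a/2) r₀) := by
    apply monotoneOn_of_deriv_nonneg (convex_Icc _ _)
    · exact fun x hx =>
        ((w_deriv s z z' z'' hz'' heq (hsub hx)).differentiableAt.continuousAt).continuousWithinAt
    · intro x hx
      rw [interior_Icc] at hx
      have hx0 : (0:ℝ) < x := by linarith [hx.1]
      exact (w_deriv s z z' z'' hz'' heq hx0).differentiableAt.differentiableWithinAt
    · intro x hx
      rw [interior_Icc] at hx
      have hx0 : (0:ℝ) < x := by linarith [hx.1]
      rw [(w_deriv s z z' z'' hz'' heq hx0).deriv]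
      exact mul_nonneg (q_pos s hx0).le (hnn x hx0)
  have hwle : ∀ x ∈ Set.Icc (a/2) r₀, x * z' x ≤ 0 := by
    intro x hx
    have := hwmono hx (Set.right_mem_Icc.mpr (by linarith)) hx.2
    simp only [hz'r₀, mul_zero] at this
    exact this
  -- G = exp(C r) * (z r - r * z' r) is monotone on [a/2, r₀]
  have hGder : ∀ t : ℝ, 0 < t → HasDerivAt (fun r => Real.exp (C*r) * (z r - r * z' r))
      (C * Real.exp (C*t) * (z t - t * z' t)
        + Real.exp (C*t) * (z' t - (1/t + t * s t ^ 2) * z t)) t := by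
    intro t ht
    have he : HasDerivAt (fun r => Real.exp (C*r)) (C * Real.exp (C*t)) t := by
      have := (Real.hasDerivAt_exp (C*t)).comp t ((hasDerivAt_id t).const_mul C)
      simpa [mul_comm, Function.comp_def] using this
    exact he.mul ((hz' t ht).sub (w_deriv s z z' z'' hz'' heq ht))
  have hGmono : MonotoneOn (fun r => Real.exp (C*r) * (z r - r * z' r)) (Set.Icc (a/2) r₀) := by
    apply monotoneOn_of_deriv_nonneg (convex_Icc _ _)
    · exact fun x hx =>
        ((hGder x (hsub hx)).differentiableAt.continuousAt).continuousWithinAt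
    · intro x hx
      rw [interior_Icc] at hx
      have hx0 : (0:ℝ) < x := by linarith [hx.1]
      exact (hGder x hx0).differentiableAt.differentiableWithinAt
    · intro x hx
      rw [interior_Icc] at hx
      have hx0 : (0:ℝ) < x := by linarith [hx.1]
      have hxmem : x ∈ Set.Icc (a/2) r₀ := ⟨hx.1.le, hx.2.le⟩
      rw [(hGder x hx0).deriv]
      have hq1 : 0 < 1/x + x * s x ^ 2 := q_pos s hx0
      have hq2 : 1/x + x * s x ^ 2 ≤ Q := hqQ x hxmem
      have hz0' : 0 ≤ z x := hnn x hx0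
      have hw0 : x * z' x ≤ 0 := hwle x hxmem
      have hz'np : z' x ≤ 0 := by nlinarith
      have hz'lb : (2/a) * (x * z' x) ≤ z' x := by
        have heq2 : (2/a) * (x * z' x) - z' x = (z' x * (2*x - a))/a := by
          field_simp
        have hnum : z' x * (2*x - a) ≤ 0 :=
          mul_nonpos_of_nonpos_of_nonneg hz'np (by linarith [hx.1])
        have := div_nonpos_of_nonpos_of_nonneg hnum ha.le
        linarith [heq2 ▸ this]
      have key : 0 ≤ C * (z x - x * z' x) + (z' x - (1/x + x * s x ^ 2) * z x) := by
        rw [hCdef]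
        nlinarith [mul_nonneg (sub_nonneg.mpr hq2) hz0',
          mul_nonpos_of_nonneg_of_nonpos hQ0 hw0,
          mul_nonneg h2a.le hz0']
      nlinarith [mul_nonneg (Real.exp_pos (C*x)).le key]
  have hmem1 : a/2 ∈ Set.Icc (a/2) r₀ := ⟨le_refl _, by linarith⟩
  have hmem2 : r₀ ∈ Set.Icc (a/2) r₀ := ⟨by linarith, le_refl _⟩
  have h1 := hGmono hmem1 hmem2 (by linarith : a/2 ≤ r₀)
  simp only [hz0, hz'r₀, mul_zero, sub_zero, zero_sub] at h1
  have h3 : 0 < z (a/2) := hpos (a/2) (by linarith) (by linarith)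
  have h4 : (a/2) * z' (a/2) ≤ 0 := hwle (a/2) hmem1
  nlinarith [Real.exp_pos (C*(a/2)), mul_pos (Real.exp_pos (C*(a/2))) (show 0 < z (a/2) - (a/2) * z' (a/2) by linarith)]
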